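/- Let G be a finitely generated group and let 𝒮_asym be the family of all finite subsets S of G that generate G as a monoid, with asymmetric word distance d_S(x,y) := the least n such that x⁻¹y is a product of n elements of S. Then a bijection φ: G → G satisfies d_S(φx, φy) = d_S(x,y) for all x, y ∈ G and all S ∈ 𝒮_asym if and only if φ is a left translation x ↦ c·x for some c ∈ G. Consequently the group of such shared isometries (under composition) is isomorphic to G. -/

import Mathlib

/-! Common definitions: word metrics, quasi-isometries, rough isometries. -/

/-- `g` is a product of `n` elements of `S ∪ S⁻¹`. -/
def IsWordProd {G : Type*} [Group G] (S : Set G) (g : G) (n : ℕ) : Prop :=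
  ∃ l : List G, l.length = n ∧ (∀ s ∈ l, s ∈ S ∪ S⁻¹) ∧ l.prod = g

/-- The word metric associated to a generating system `S`: the least `n` such that
`x⁻¹ * y` is a product of `n` elements of `S ∪ S⁻¹`. -/
noncomputable def wdist {G : Type*} [Group G] (S : Set G) (x y : G) : ℕ :=
  sInf {n | IsWordProd S (x⁻¹ * y) n}

/-- The word norm `‖g‖_S = d_S(e, g)`. -/
noncomputable def wnorm {G : Type*} [Group G] (S : Set G) (g : G) : ℕ :=
  wdist S 1 g

/-- `(η, η')` is a `(lam, eps)`-quasi-isometry between `(X, dX)` and `(Y, dY)`. -/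
def IsQIPair {X Y : Type*} (dX : X → X → ℝ) (dY : Y → Y → ℝ)
    (η : X → Y) (η' : Y → X) (lam eps : ℝ) : Prop :=
  (∀ x x' : X, lam⁻¹ * dX x x' - eps ≤ dY (η x) (η x') ∧
      dY (η x) (η x') ≤ lam * dX x x' + eps) ∧
  (∀ y y' : Y, lam⁻¹ * dY y y' - eps ≤ dX (η' y) (η' y') ∧
      dX (η' y) (η' y') ≤ lam * dY y y' + eps) ∧
  (∀ y : Y, dY (η (η' y)) y ≤ eps) ∧
  (∀ x : X, dX (η' (η x)) x ≤ eps)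

/-- `(η, η')` is an `eps`-isometry between `(X, dX)` and `(Y, dY)`. -/
def IsEpsIsomPair {X Y : Type*} (dX : X → X → ℝ) (dY : Y → Y → ℝ)
    (η : X → Y) (η' : Y → X) (eps : ℝ) : Prop :=
  (∀ x x' : X, |dX x x' - dY (η x) (η x')| ≤ eps) ∧
  (∀ y y' : Y, |dY y y' - dX (η' y) (η' y')| ≤ eps) ∧
  (∀ y : Y, dY (η (η' y)) y ≤ eps) ∧
  (∀ x : X, dX (η' (η x)) x ≤ eps)

/-- The real-valued word metric. -/
noncomputable def wdistR {G : Type*} [Group G] (S : Set G) (x y : G) : ℝ :=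
  (wdist S x y : ℝ)

/-- The asymmetric word distance: the least `n` such that `x⁻¹ * y` is a product of `n`
elements of `S` (inverses are not allowed). -/
noncomputable def awdist {G : Type*} [Group G] (S : Set G) (x y : G) : ℕ :=
  sInf {n | ∃ l : List G, l.length = n ∧ (∀ s ∈ l, s ∈ S) ∧ l.prod = x⁻¹ * y}

/-- The group (under composition) of bijections of `G` preserving the distance `d S`
for every generating system `S` in the family `𝒮`, as a subgroup of `Equiv.Perm G`. -/
def sharedIsomGroup {G : Type*} [Group G] (𝒮 : Set (Set G))
    (d : Set G → G → G → ℕ) : Subgroup (Equiv.Perm G) where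
  carrier := {φ : Equiv.Perm G | ∀ S ∈ 𝒮, ∀ x y : G, d S (φ x) (φ y) = d S x y}
  one_mem' := fun S _ x y => rfl
  mul_mem' := by
    intro a b ha hb S hS x y
    rw [Equiv.Perm.mul_apply, Equiv.Perm.mul_apply, ha S hS, hb S hS]
  inv_mem' := by
    intro a ha S hS x y
    have h := ha S hS (a⁻¹ x) (a⁻¹ y)
    rw [← Equiv.Perm.mul_apply, ← Equiv.Perm.mul_apply, mul_inv_cancel, Equiv.Perm.one_apply,
      Equiv.Perm.one_apply] at h
    exact h.symm

/-- The family of all finite subsets of `G` generating `G` as a monoid. -/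
def asymGenFamily (G : Type*) [Group G] : Set (Set G) :=
  {S : Set G | S.Finite ∧ Submonoid.closure S = ⊤}

section AuxAwdist

open Pointwise

variable {G : Type*} [Group G]

/-- The set of lengths of `S`-words representing `g`. -/
def AProdSet (S : Set G) (g : G) : Set ℕ :=
  {n | ∃ l : List G, l.length = n ∧ (∀ s ∈ l, s ∈ S) ∧ l.prod = g}

lemma awdist_eq_sInf (S : Set G) (x y : G) :
    awdist S x y = sInf (AProdSet S (x⁻¹ * y)) := rfl

lemma awdist_one_left (S : Set G) (g : G) :
    awdist S 1 g = sInf (AProdSet S g) := by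
  rw [awdist_eq_sInf, inv_one, one_mul]

lemma awdist_mul_left (S : Set G) (c x y : G) :
    awdist S (c * x) (c * y) = awdist S x y := by
  rw [awdist_eq_sInf, awdist_eq_sInf]
  have h : (c * x)⁻¹ * (c * y) = x⁻¹ * y := by group
  rw [h]

lemma awdist_shift (S : Set G) (x y : G) :
    awdist S x y = awdist S 1 (x⁻¹ * y) := by
  rw [awdist_one_left, awdist_eq_sInf]

lemma aprodSet_nonempty {S : Set G} (hS : Submonoid.closure S = ⊤) (g : G) :
    (AProdSet S g).Nonempty := by
  obtain ⟨l, hl, hp⟩ := Submonoid.exists_list_of_mem_closure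
    (show g ∈ Submonoid.closure S by rw [hS]; trivial)
  exact ⟨l.length, l, rfl, hl, hp⟩

lemma awdist_one_eq_zero_iff {S : Set G} (hS : Submonoid.closure S = ⊤) (g : G) :
    awdist S 1 g = 0 ↔ g = 1 := by
  rw [awdist_one_left]
  constructor
  · intro h
    rcases Nat.sInf_eq_zero.mp h with h0 | he
    · obtain ⟨l, hl, _, hp⟩ := h0
      rw [List.length_eq_zero_iff.mp hl] at hp
      simpa using hp.symm
    · exact absurd he (aprodSet_nonempty hS g).ne_empty
  · rintro rfl
    exact Nat.sInf_eq_zero.mpr (Or.inl ⟨[], rfl, by simp, rfl⟩)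

lemma awdist_one_eq_one {S : Set G} (hS : Submonoid.closure S = ⊤) {g : G}
    (hg : g ∈ S) (hg1 : g ≠ 1) : awdist S 1 g = 1 := by
  have hle : awdist S 1 g ≤ 1 := by
    rw [awdist_one_left]
    exact Nat.sInf_le ⟨[g], rfl, by simpa using hg, by simp⟩
  have hne : awdist S 1 g ≠ 0 := fun h => hg1 ((awdist_one_eq_zero_iff hS g).mp h)
  omega

lemma awdist_one_ne_one {S : Set G} {g : G} (hg : g ∉ S) : awdist S 1 g ≠ 1 := by
  intro h
  rw [awdist_one_left] at h
  have hne : (AProdSet S g).Nonempty := by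
    by_contra hcon
    rw [Set.not_nonempty_iff_eq_empty] at hcon
    rw [hcon, Nat.sInf_empty] at h
    exact absurd h (by norm_num)
  have hmem := Nat.sInf_mem hne
  rw [h] at hmem
  obtain ⟨l, hl, hmem', hp⟩ := hmem
  obtain ⟨x, rfl⟩ := List.length_eq_one_iff.mp hl
  simp only [List.prod_cons, List.prod_nil, mul_one] at hp
  exact hg (hp ▸ hmem' x (by simp))

/-- Separation: for distinct nontrivial `a b`, some finite monoid generating set
distinguishes their asymmetric word norms. -/
lemma awdist_separation {T : Set G} (hTfin : T.Finite)
    (hTgen : Submonoid.closure T = ⊤) {a b : G}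
    (hab : a ≠ b) (ha : a ≠ 1) (hb : b ≠ 1) :
    ∃ S : Set G, S.Finite ∧ Submonoid.closure S = ⊤ ∧
      awdist S 1 a ≠ awdist S 1 b := by
  set U : Set G := T ∪ {1, a, a⁻¹, b} with hU
  have hUfin : U.Finite := hTfin.union (Set.toFinite _)
  have h1U : (1 : G) ∈ U := by simp [hU]
  have haU : a ∈ U := by simp [hU]
  have haiU : a⁻¹ ∈ U := by simp [hU]
  have hbU : b ∈ U := by simp [hU]
  set S : Set G := (U * U) \ {b} with hS
  have hSfin : S.Finite := (hUfin.mul hUfin).diff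
  have hUsub : ∀ u ∈ U, u ≠ b → u ∈ S := by
    intro u hu hub
    refine ⟨?_, by simpa using hub⟩
    simpa using Set.mul_mem_mul hu h1U
  have haS : a ∈ S := hUsub a haU hab
  have haibS : a⁻¹ * b ∈ S := by
    refine ⟨Set.mul_mem_mul haiU hbU, ?_⟩
    simp only [Set.mem_singleton_iff]
    intro h
    exact ha (by rwa [mul_eq_right, inv_eq_one] at h)
  have hbS : b ∉ S := by simp [hS]
  have hSgen : Submonoid.closure S = ⊤ := by
    rw [eq_top_iff, ← hTgen]
    apply Submonoid.closure_le.mpr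
    intro t ht
    by_cases htb : t = b
    · subst htb
      have : t = a * (a⁻¹ * t) := by group
      rw [this]
      exact mul_mem (Submonoid.subset_closure haS) (Submonoid.subset_closure haibS)
    · exact Submonoid.subset_closure (hUsub t (Or.inl ht) htb)
  refine ⟨S, hSfin, hSgen, ?_⟩
  rw [awdist_one_eq_one hSgen haS ha]
  exact fun h => awdist_one_ne_one hbS h.symm

/-- The forward direction: a map (not even assumed bijective) preserving all asymmetric
word distances is a left translation. -/
lemma awdist_preserving_is_translation {T : Set G} (hTfin : T.Finite)
    (hTgen : Submonoid.closure T = ⊤) (φ : G → G)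
    (h : ∀ S : Set G, S.Finite → Submonoid.closure S = ⊤ →
      ∀ x y : G, awdist S (φ x) (φ y) = awdist S x y) :
    ∀ x : G, φ x = φ 1 * x := by
  intro g
  set a : G := (φ 1)⁻¹ * φ g with haDef
  have key : ∀ S : Set G, S.Finite → Submonoid.closure S = ⊤ →
      awdist S 1 a = awdist S 1 g := by
    intro S h1 h2
    rw [← h S h1 h2 1 g, awdist_shift S (φ 1) (φ g)]
  suffices hag : a = g by
    conv_rhs => rw [← hag]
    exact (mul_inv_cancel_left (φ 1) (φ g)).symm
  by_contra hab
  by_cases hg1 : g = 1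
  · subst hg1
    have := (key T hTfin hTgen).trans ((awdist_one_eq_zero_iff hTgen (1 : G)).mpr rfl)
    exact hab ((awdist_one_eq_zero_iff hTgen a).mp this)
  by_cases ha1 : a = 1
  · have h0 : awdist T 1 g = 0 := by
      rw [← key T hTfin hTgen, ha1]
      exact (awdist_one_eq_zero_iff hTgen (1 : G)).mpr rfl
    exact hg1 ((awdist_one_eq_zero_iff hTgen g).mp h0)
  · obtain ⟨S, h1, h2, h3⟩ := awdist_separation hTfin hTgen hab ha1 hg1
    exact h3 (key S h1 h2)

end AuxAwdist


theorem shared_isometries_asymmetric {G : Type*} [Group G] [Group.FG G] :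
    (∀ φ : G → G, Function.Bijective φ →
      ((∀ S : Set G, S.Finite → Submonoid.closure S = ⊤ →
          ∀ x y : G, awdist S (φ x) (φ y) = awdist S x y) ↔
        ∃ c : G, ∀ x : G, φ x = c * x)) ∧
    Nonempty (G ≃* sharedIsomGroup (asymGenFamily G) awdist) := by
  obtain ⟨F, hF⟩ := Group.FG.out (G := G)
  set T : Set G := ↑F ∪ (↑F : Set G)⁻¹ with hT
  have hTfin : T.Finite := F.finite_toSet.union F.finite_toSet.inv
  have hTgen : Submonoid.closure T = ⊤ := by
    have h := Subgroup.closure_toSubmonoid (↑F : Set G)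
    rw [hF] at h
    rw [hT, ← h, Subgroup.top_toSubmonoid]
  constructor
  · intro φ _
    constructor
    · intro h
      exact ⟨φ 1, awdist_preserving_is_translation hTfin hTgen φ h⟩
    · rintro ⟨c, hc⟩ S _ _ x y
      rw [hc x, hc y, awdist_mul_left]
  · have mem : ∀ c : G, Equiv.mulLeft c ∈ sharedIsomGroup (asymGenFamily G) awdist := by
      intro c S _ x y
      simpa using awdist_mul_left S c x y
    let f : G →* sharedIsomGroup (asymGenFamily G) awdist :=
      { toFun := fun c => ⟨Equiv.mulLeft c, mem c⟩
        map_one' := by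
          apply Subtype.ext; apply Equiv.ext; intro x; simp
        map_mul' := by
          intro c d
          apply Subtype.ext; apply Equiv.ext; intro x
          simp [mul_assoc] }
    refine ⟨MulEquiv.ofBijective f ⟨?_, ?_⟩⟩
    · intro c d hcd
      simpa [f] using congrArg (fun ψ : sharedIsomGroup (asymGenFamily G) awdist =>
        (ψ : Equiv.Perm G) 1) hcd
    · rintro ⟨ψ, hψ⟩
      have h : ∀ S : Set G, S.Finite → Submonoid.closure S = ⊤ →
          ∀ x y : G, awdist S (ψ x) (ψ y) = awdist S x y := by
        intro S h1 h2 x y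
        exact hψ S ⟨h1, h2⟩ x y
      have htr := awdist_preserving_is_translation hTfin hTgen ψ h
      refine ⟨ψ 1, ?_⟩
      apply Subtype.ext; apply Equiv.ext; intro x
      simpa [f] using (htr x).symm
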